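/- Let (c_i^0) be a nonnegative sequence with ∑_{i=1}^{∞} i c_i^0 < ∞. Then there exists a convex function γ : [0,∞) → [0,∞) with γ(0) = 0, γ' concave and nonnegative, and γ(r)/r → ∞ as r → ∞, such that ∑_{i=1}^{∞} γ(i) c_i^0 < ∞. -/

import Mathlib

set_option maxHeartbeats 4000000

open Filter Set Topology

namespace Stmt10Aux

variable {n : ℕ → ℕ}

noncomputable def f (n : ℕ → ℕ) (k : ℕ) (x : ℝ) : ℝ := min (max x 0) (n k) / (n k)

lemma npos (hn4 : ∀ k, (4:ℝ)^k ≤ (n k : ℝ)) (k : ℕ) : (0:ℝ) < (n k : ℝ) :=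
  lt_of_lt_of_le (by positivity) (hn4 k)

lemma f_nonneg (hn4 : ∀ k, (4:ℝ)^k ≤ (n k : ℝ)) (k : ℕ) (x : ℝ) : 0 ≤ f n k x :=
  div_nonneg (le_min (le_max_right _ _) (le_of_lt (npos hn4 k))) (le_of_lt (npos hn4 k))

lemma f_le (hn4 : ∀ k, (4:ℝ)^k ≤ (n k : ℝ)) (k : ℕ) (x : ℝ) :
    f n k x ≤ max x 0 * (1/4)^k := by
  have h2 : f n k x ≤ max x 0 / (4:ℝ)^k := by
    calc f n k x ≤ max x 0 / (n k) :=
          div_le_div_of_nonneg_right (min_le_left _ _) (le_of_lt (npos hn4 k))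
      _ ≤ max x 0 / (4:ℝ)^k :=
          div_le_div_of_nonneg_left (le_max_right _ _) (by positivity) (hn4 k)
  refine h2.trans_eq ?_
  rw [div_eq_mul_inv, ← inv_pow]
  norm_num

lemma geom_summable : Summable (fun k : ℕ => (1/4:ℝ)^k) :=
  summable_geometric_of_lt_one (by norm_num) (by norm_num)

lemma f_summable (hn4 : ∀ k, (4:ℝ)^k ≤ (n k : ℝ)) (x : ℝ) : Summable (fun k => f n k x) :=
  Summable.of_nonneg_of_le (fun k => f_nonneg hn4 k x) (fun k => f_le hn4 k x)
    (geom_summable.mul_left _)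

lemma f_mono (hn4 : ∀ k, (4:ℝ)^k ≤ (n k : ℝ)) (k : ℕ) : Monotone (f n k) := fun x y hxy => by
  refine div_le_div_of_nonneg_right ?_ (le_of_lt (npos hn4 k))
  exact min_le_min (max_le_max hxy (le_refl _)) (le_refl _)

lemma f_lip (hn4 : ∀ k, (4:ℝ)^k ≤ (n k : ℝ)) (k : ℕ) (x y : ℝ) :
    |f n k x - f n k y| ≤ (1/4)^k * |x - y| := by
  have h0 : |f n k x - f n k y| = |min (max x 0) (n k) - min (max y 0) (n k)| / (n k) := by
    rw [f, f, div_sub_div_same, abs_div, abs_of_pos (npos hn4 k)]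
  rw [h0]
  have h1 : |min (max x 0) (n k) - min (max y 0) (n k)| ≤ |x - y| := by
    refine (abs_min_sub_min_le_max _ _ _ _).trans ?_
    refine max_le ((abs_max_sub_max_le_abs _ _ _).trans (le_refl _)) (by simp)
  calc |min (max x 0) (n k) - min (max y 0) (n k)| / (n k) ≤ |x - y| / (n k) :=
        div_le_div_of_nonneg_right h1 (le_of_lt (npos hn4 k))
    _ ≤ |x - y| / (4:ℝ)^k :=
        div_le_div_of_nonneg_left (abs_nonneg _) (by positivity) (hn4 k)
    _ = (1/4)^k * |x - y| := by rw [div_eq_mul_inv, ← inv_pow, mul_comm]; norm_num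

noncomputable def g (n : ℕ → ℕ) (x : ℝ) : ℝ := ∑' k, f n k x

lemma g_nonneg (hn4 : ∀ k, (4:ℝ)^k ≤ (n k : ℝ)) (x : ℝ) : 0 ≤ g n x :=
  tsum_nonneg (fun k => f_nonneg hn4 k x)

lemma g_zero : g n 0 = 0 := by
  unfold g f
  simp

lemma g_mono (hn4 : ∀ k, (4:ℝ)^k ≤ (n k : ℝ)) : Monotone (g n) := fun x y hxy => by
  unfold g
  exact Summable.tsum_le_tsum (fun k => f_mono hn4 k hxy) (f_summable hn4 x) (f_summable hn4 y)

lemma g_lip (hn4 : ∀ k, (4:ℝ)^k ≤ (n k : ℝ)) : LipschitzWith 2 (g n) := by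
  refine LipschitzWith.of_dist_le_mul (fun x y => ?_)
  rw [Real.dist_eq, Real.dist_eq]
  have hsub : g n x - g n y = ∑' k, (f n k x - f n k y) := by
    unfold g
    exact (Summable.tsum_sub (f_summable hn4 x) (f_summable hn4 y)).symm
  have hs : Summable (fun k => |f n k x - f n k y|) :=
    Summable.of_nonneg_of_le (fun k => abs_nonneg _) (fun k => f_lip hn4 k x y)
      (geom_summable.mul_right _)
  have hs' : Summable (fun k => ‖f n k x - f n k y‖) := by
    simpa only [Real.norm_eq_abs] using hs
  have h1 : |∑' k, (f n k x - f n k y)| ≤ ∑' k, |f n k x - f n k y| := by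
    have := norm_tsum_le_tsum_norm hs'
    simpa only [Real.norm_eq_abs] using this
  have h2 : ∑' k, |f n k x - f n k y| ≤ ∑' k : ℕ, (1/4:ℝ)^k * |x - y| :=
    Summable.tsum_le_tsum (fun k => f_lip hn4 k x y) hs (geom_summable.mul_right _)
  have h3 : ∑' k : ℕ, (1/4:ℝ)^k * |x - y| = (4/3) * |x - y| := by
    rw [tsum_mul_right, tsum_geometric_of_lt_one (by norm_num) (by norm_num)]
    norm_num
  rw [hsub]
  have h4 := (h1.trans h2).trans_eq h3
  push_cast
  nlinarith [abs_nonneg (x - y), h4]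

lemma g_cont (hn4 : ∀ k, (4:ℝ)^k ≤ (n k : ℝ)) : Continuous (g n) := (g_lip hn4).continuous

lemma g_concave (hn4 : ∀ k, (4:ℝ)^k ≤ (n k : ℝ)) : ConcaveOn ℝ (Set.Ici 0) (g n) := by
  refine ⟨convex_Ici 0, fun x hx y hy a b ha hb hab => ?_⟩
  simp only [smul_eq_mul]
  have hx' : (0:ℝ) ≤ x := hx
  have hy' : (0:ℝ) ≤ y := hy
  have key : ∀ k, a * f n k x + b * f n k y ≤ f n k (a * x + b * y) := by
    intro k
    have hx0 : max x 0 = x := max_eq_left hx'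
    have hy0 : max y 0 = y := max_eq_left hy'
    have hxy0 : max (a * x + b * y) 0 = a * x + b * y := max_eq_left (by positivity)
    unfold f
    rw [hx0, hy0, hxy0]
    have hrw : a * (min x (n k) / (n k)) + b * (min y (n k) / (n k))
        = (a * min x (n k) + b * min y (n k)) / (n k) := by ring
    rw [hrw]
    refine div_le_div_of_nonneg_right ?_ (le_of_lt (npos hn4 k))
    refine le_min ?_ ?_
    · nlinarith [min_le_left x ((n k : ℝ)), min_le_left y ((n k : ℝ))]
    · nlinarith [min_le_right x ((n k : ℝ)), min_le_right y ((n k : ℝ)), npos hn4 k]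
  have hsx := (f_summable hn4 x).mul_left a
  have hsy := (f_summable hn4 y).mul_left b
  calc a * g n x + b * g n y = ∑' k, (a * f n k x + b * f n k y) := by
        rw [g, g, ← tsum_mul_left, ← tsum_mul_left]
        exact (Summable.tsum_add hsx hsy).symm
    _ ≤ ∑' k, f n k (a * x + b * y) := Summable.tsum_le_tsum key (hsx.add hsy) (f_summable hn4 _)
    _ = g n (a • x + b • y) := by rw [g, smul_eq_mul, smul_eq_mul]

end Stmt10Aux

namespace Stmt10Aux

lemma g_unbounded (hn4 : ∀ k, (4:ℝ)^k ≤ (n k : ℝ)) (b : ℝ) : ∃ x : ℝ, b ≤ g n x := by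
  obtain ⟨K, hK⟩ := exists_nat_ge b
  refine ⟨((Finset.range (K+1)).sup n : ℕ), ?_⟩
  have hterm : ∀ k ∈ Finset.range (K+1), (1:ℝ) ≤ f n k ((Finset.range (K+1)).sup n : ℕ) := by
    intro k hk
    have hle : (n k : ℝ) ≤ ((Finset.range (K+1)).sup n : ℕ) := by
      exact_mod_cast Finset.le_sup (f := n) hk
    have hmax : max (((Finset.range (K+1)).sup n : ℕ) : ℝ) 0
        = (((Finset.range (K+1)).sup n : ℕ) : ℝ) := max_eq_left (by positivity)
    rw [f, hmax, min_eq_right hle, div_self (ne_of_gt (npos hn4 k))]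
  have hsum : ∑ k ∈ Finset.range (K+1), f n k ((Finset.range (K+1)).sup n : ℕ)
      ≤ g n ((Finset.range (K+1)).sup n : ℕ) :=
    Summable.sum_le_tsum _ (fun k _ => f_nonneg hn4 k _) (f_summable hn4 _)
  have : (K+1 : ℝ) ≤ ∑ k ∈ Finset.range (K+1), f n k ((Finset.range (K+1)).sup n : ℕ) := by
    calc (K+1 : ℝ) = ∑ _k ∈ Finset.range (K+1), (1:ℝ) := by simp
      _ ≤ _ := Finset.sum_le_sum hterm
  linarith

lemma g_atTop (hn4 : ∀ k, (4:ℝ)^k ≤ (n k : ℝ)) : Tendsto (g n) atTop atTop :=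
  tendsto_atTop_atTop_of_monotone (g_mono hn4) (g_unbounded hn4)

end Stmt10Aux

namespace Stmt10Aux

noncomputable def gam (n : ℕ → ℕ) (x : ℝ) : ℝ := ∫ t in (0:ℝ)..x, g n t

lemma g_intble (hn4 : ∀ k, (4:ℝ)^k ≤ (n k : ℝ)) (a b : ℝ) :
    IntervalIntegrable (g n) MeasureTheory.volume a b :=
  (g_cont hn4).intervalIntegrable a b

lemma gam_hasDeriv (hn4 : ∀ k, (4:ℝ)^k ≤ (n k : ℝ)) (x : ℝ) :
    HasDerivAt (gam n) (g n x) x :=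
  intervalIntegral.integral_hasDerivAt_right (g_intble hn4 0 x)
    ((g_cont hn4).stronglyMeasurableAtFilter _ _) (g_cont hn4).continuousAt

lemma gam_deriv (hn4 : ∀ k, (4:ℝ)^k ≤ (n k : ℝ)) : deriv (gam n) = g n :=
  funext fun x => (gam_hasDeriv hn4 x).deriv

lemma gam_diff (hn4 : ∀ k, (4:ℝ)^k ≤ (n k : ℝ)) : Differentiable ℝ (gam n) :=
  fun x => (gam_hasDeriv hn4 x).differentiableAt

lemma gam_contDiff (hn4 : ∀ k, (4:ℝ)^k ≤ (n k : ℝ)) : ContDiff ℝ 1 (gam n) :=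
  contDiff_one_iff_deriv.2 ⟨gam_diff hn4, by rw [gam_deriv hn4]; exact g_cont hn4⟩

lemma gam_zero : gam n 0 = 0 := intervalIntegral.integral_same

lemma gam_nonneg (hn4 : ∀ k, (4:ℝ)^k ≤ (n k : ℝ)) {x : ℝ} (hx : 0 ≤ x) : 0 ≤ gam n x :=
  intervalIntegral.integral_nonneg hx (fun u _ => g_nonneg hn4 u)

lemma gam_convex (hn4 : ∀ k, (4:ℝ)^k ≤ (n k : ℝ)) : ConvexOn ℝ (Set.Ici 0) (gam n) := by
  refine MonotoneOn.convexOn_of_deriv (convex_Ici 0) (gam_diff hn4).continuous.continuousOn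
    (gam_diff hn4).differentiableOn ?_
  rw [gam_deriv hn4]
  exact (g_mono hn4).monotoneOn _

lemma gam_le (hn4 : ∀ k, (4:ℝ)^k ≤ (n k : ℝ)) {x : ℝ} (hx : 0 ≤ x) :
    gam n x ≤ x * g n x := by
  have h1 : gam n x ≤ ∫ _t in (0:ℝ)..x, g n x :=
    intervalIntegral.integral_mono_on hx (g_intble hn4 0 x) intervalIntegrable_const
      (fun t ht => g_mono hn4 ht.2)
  simpa [smul_eq_mul] using h1

lemma gam_lower (hn4 : ∀ k, (4:ℝ)^k ≤ (n k : ℝ)) {r : ℝ} (hr : 0 < r) :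
    g n (r/2) / 2 ≤ gam n r / r := by
  have hsplit : gam n r = (∫ t in (0:ℝ)..(r/2), g n t) + ∫ t in (r/2)..r, g n t :=
    (intervalIntegral.integral_add_adjacent_intervals (g_intble hn4 0 (r/2))
      (g_intble hn4 (r/2) r)).symm
  have h1 : 0 ≤ ∫ t in (0:ℝ)..(r/2), g n t :=
    intervalIntegral.integral_nonneg (by linarith) (fun u _ => g_nonneg hn4 u)
  have h2 : (r - r/2) * g n (r/2) ≤ ∫ t in (r/2)..r, g n t := by
    have := intervalIntegral.integral_mono_on (by linarith : r/2 ≤ r)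
      intervalIntegrable_const (g_intble hn4 (r/2) r)
      (fun t ht => g_mono hn4 ht.1)
    simpa [smul_eq_mul] using this
  rw [div_le_div_iff₀ two_pos hr]
  nlinarith [g_nonneg hn4 (r/2)]

lemma gam_superlinear (hn4 : ∀ k, (4:ℝ)^k ≤ (n k : ℝ)) :
    Tendsto (fun r : ℝ => gam n r / r) atTop atTop := by
  have hlow : Tendsto (fun r : ℝ => g n (r/2) / 2) atTop atTop :=
    ((g_atTop hn4).comp (tendsto_id.atTop_div_const two_pos)).atTop_div_const two_pos
  refine tendsto_atTop_mono' atTop ?_ hlow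
  filter_upwards [eventually_gt_atTop (0:ℝ)] with r hr
  exact gam_lower hn4 hr

end Stmt10Aux

open Stmt10Aux in
/-- Refined De la Vallée-Poussin theorem applied to data with finite mass:
    there is a superlinear convex weight γ in the class G still summable
    against the data. -/
theorem stmt10 (c0 : ℕ → ℝ) (hc0 : ∀ i, 0 ≤ c0 i)
    (hmass : Summable (fun i : ℕ => (i : ℝ) * c0 i)) :
    ∃ γ : ℝ → ℝ,
      ContDiff ℝ 1 γ ∧
      (∀ x : ℝ, 0 ≤ x → 0 ≤ γ x) ∧
      γ 0 = 0 ∧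
      ConvexOn ℝ (Set.Ici 0) γ ∧
      ConcaveOn ℝ (Set.Ici 0) (deriv γ) ∧
      (∀ x : ℝ, 0 ≤ x → 0 ≤ deriv γ x) ∧
      Tendsto (fun r : ℝ => γ r / r) atTop atTop ∧
      Summable (fun i : ℕ => γ i * c0 i) := by
  classical
  set h : ℕ → ℝ := fun i => (i : ℝ) * c0 i with hdef
  have hhnn : ∀ i, 0 ≤ h i := fun i => mul_nonneg (Nat.cast_nonneg i) (hc0 i)
  have ht : Tendsto (fun m => ∑' j, h (j + m)) atTop (𝓝 0) := tendsto_sum_nat_add h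
  have hNex : ∀ k : ℕ, ∃ N, ∀ m ≥ N, (∑' j, h (j + m)) < (1/2:ℝ)^k := fun k =>
    eventually_atTop.mp (ht.eventually_lt_const (by positivity : (0:ℝ) < (1/2)^k))
  choose N hNs using hNex
  set m : ℕ → ℕ := fun k => max (N k) (2^k) with mdef
  set n : ℕ → ℕ := fun k => (m k)^2 with ndef
  have hm2 : ∀ k, (2:ℝ)^k ≤ (m k : ℝ) := by
    intro k
    have h1 : (2^k : ℕ) ≤ m k := le_max_right _ _
    calc (2:ℝ)^k = ((2^k : ℕ) : ℝ) := by push_cast; ring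
      _ ≤ (m k : ℝ) := Nat.cast_le.2 h1
  have hmpos : ∀ k, (0:ℝ) < (m k : ℝ) := fun k => lt_of_lt_of_le (by positivity) (hm2 k)
  have hnm : ∀ k, ((n k : ℕ) : ℝ) = ((m k : ℝ))^2 := by
    intro k; rw [ndef]; push_cast; ring
  have hn4 : ∀ k, (4:ℝ)^k ≤ ((n k : ℕ) : ℝ) := by
    intro k
    rw [hnm k]
    calc (4:ℝ)^k = ((2:ℝ)^k)^2 := by
          rw [show (4:ℝ) = 2^2 by norm_num, ← pow_mul, ← pow_mul, mul_comm]
      _ ≤ ((m k : ℝ))^2 := pow_le_pow_left₀ (by positivity) (hm2 k) 2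
  have htail : ∀ k, (∑' j, h (j + m k)) < (1/2:ℝ)^k := fun k =>
    hNs k (m k) (le_max_left _ _)
  -- the weight
  refine ⟨gam n, gam_contDiff hn4, fun x hx => gam_nonneg hn4 hx, gam_zero,
    gam_convex hn4, ?_, ?_, gam_superlinear hn4, ?_⟩
  · rw [gam_deriv hn4]; exact g_concave hn4
  · intro x _; rw [gam_deriv hn4]; exact g_nonneg hn4 x
  -- summability
  set M := ∑' i, h i with Mdef
  have hM0 : 0 ≤ M := tsum_nonneg hhnn
  have hfnn : ∀ k i : ℕ, 0 ≤ (i:ℝ) * f n k i * c0 i := fun k i =>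
    mul_nonneg (mul_nonneg (Nat.cast_nonneg i) (f_nonneg hn4 k i)) (hc0 i)
  have hsumk : ∀ i : ℕ, Summable (fun k => (i:ℝ) * f n k i * c0 i) := fun i =>
    (((f_summable hn4 (i:ℝ)).mul_left (i:ℝ)).mul_right (c0 i))
  have hig : ∀ i : ℕ, ∑' k, ((i:ℝ) * f n k i * c0 i) = (i:ℝ) * g n i * c0 i := by
    intro i
    calc ∑' k, ((i:ℝ) * f n k i * c0 i) = ∑' k, ((i:ℝ) * c0 i) * f n k i :=
          tsum_congr (fun k => by ring)
      _ = ((i:ℝ) * c0 i) * ∑' k, f n k i := tsum_mul_left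
      _ = (i:ℝ) * g n i * c0 i := by rw [g]; ring
  -- termwise bound
  have hterm : ∀ k i : ℕ, (i:ℝ) * f n k i * c0 i
      ≤ (1/(m k : ℝ)) * h i + (if m k ≤ i then h i else 0) := by
    intro k i
    have hmax : max ((i:ℕ):ℝ) 0 = (i:ℝ) := max_eq_left (Nat.cast_nonneg i)
    by_cases hi : m k ≤ i
    · have hf1 : f n k i ≤ 1 := by
        rw [f, hmax]
        exact div_le_one_of_le₀ (min_le_right _ _) (le_of_lt (npos hn4 k))
      have : (i:ℝ) * f n k i * c0 i ≤ h i := by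
        rw [hdef]
        have := mul_le_mul_of_nonneg_right
          (mul_le_mul_of_nonneg_left hf1 (Nat.cast_nonneg i)) (hc0 i)
        simpa using this
      simp only [hi, if_true]
      have : (0:ℝ) ≤ (1/(m k : ℝ)) * h i := mul_nonneg (by positivity) (hhnn i)
      linarith [‹(i:ℝ) * f n k i * c0 i ≤ h i›]
    · push_neg at hi
      have hilt : (i:ℝ) < (m k : ℝ) := by exact_mod_cast hi
      have hf1 : f n k i ≤ 1/(m k : ℝ) := by
        rw [f, hmax]
        calc min (i:ℝ) (n k) / (n k) ≤ (i:ℝ) / (n k) :=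
              div_le_div_of_nonneg_right (min_le_left _ _) (le_of_lt (npos hn4 k))
          _ ≤ (m k : ℝ) / (n k) :=
              div_le_div_of_nonneg_right (le_of_lt hilt) (le_of_lt (npos hn4 k))
          _ = 1/(m k : ℝ) := by
              rw [hnm k, pow_two]
              rw [eq_div_iff (ne_of_gt (hmpos k))]
              field_simp
              exact div_self (ne_of_gt (hmpos k))
      simp only [not_le.2 hi, if_false, add_zero, hdef]
      calc (i:ℝ) * f n k i * c0 i ≤ (i:ℝ) * (1/(m k : ℝ)) * c0 i := by
            have := mul_le_mul_of_nonneg_right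
              (mul_le_mul_of_nonneg_left hf1 (Nat.cast_nonneg i)) (hc0 i)
            simpa using this
        _ = (1/(m k : ℝ)) * ((i:ℝ) * c0 i) := by ring
  -- partial-sum bound for fixed k
  have hA : ∀ k K : ℕ, ∑ i ∈ Finset.range K, (i:ℝ) * f n k i * c0 i ≤ (M+1) * (1/2:ℝ)^k := by
    intro k K
    have step1 : ∑ i ∈ Finset.range K, (i:ℝ) * f n k i * c0 i
        ≤ ∑ i ∈ Finset.range K, ((1/(m k : ℝ)) * h i + (if m k ≤ i then h i else 0)) :=
      Finset.sum_le_sum (fun i _ => hterm k i)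
    have step2 : ∑ i ∈ Finset.range K, ((1/(m k : ℝ)) * h i + (if m k ≤ i then h i else 0))
        = (1/(m k : ℝ)) * ∑ i ∈ Finset.range K, h i
          + ∑ i ∈ Finset.range K, (if m k ≤ i then h i else 0) := by
      rw [Finset.sum_add_distrib, Finset.mul_sum]
    have hb1 : ∑ i ∈ Finset.range K, h i ≤ M :=
      Summable.sum_le_tsum _ (fun i _ => hhnn i) hmass
    have hb1' : 0 ≤ ∑ i ∈ Finset.range K, h i := Finset.sum_nonneg (fun i _ => hhnn i)
    have hb2 : ∑ i ∈ Finset.range K, (if m k ≤ i then h i else 0) ≤ ∑' j, h (j + m k) := by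
      have e1 : ∑ i ∈ Finset.range K, (if m k ≤ i then h i else 0)
          = ∑ i ∈ (Finset.range K).filter (fun i => m k ≤ i), h i :=
        (Finset.sum_filter _ _).symm
      have hsubset : (Finset.range K).filter (fun i => m k ≤ i) ⊆ Finset.Ico (m k) (m k + K) := by
        intro i hi
        simp only [Finset.mem_filter, Finset.mem_range] at hi
        simp only [Finset.mem_Ico]
        omega
      have e2 : ∑ i ∈ (Finset.range K).filter (fun i => m k ≤ i), h i
          ≤ ∑ i ∈ Finset.Ico (m k) (m k + K), h i :=
        Finset.sum_le_sum_of_subset_of_nonneg hsubset (fun i _ _ => hhnn i)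
      have e3 : ∑ i ∈ Finset.Ico (m k) (m k + K), h i
          = ∑ j ∈ Finset.range K, h (m k + j) := by
        rw [Finset.sum_Ico_eq_sum_range, Nat.add_sub_cancel_left]
      have e4 : ∑ j ∈ Finset.range K, h (m k + j) = ∑ j ∈ Finset.range K, h (j + m k) :=
        Finset.sum_congr rfl (fun j _ => by rw [add_comm])
      have e5 : ∑ j ∈ Finset.range K, h (j + m k) ≤ ∑' j, h (j + m k) :=
        Summable.sum_le_tsum _ (fun j _ => hhnn _) ((summable_nat_add_iff (m k)).2 hmass)
      rw [e1]
      calc _ ≤ _ := e2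
        _ = _ := e3
        _ = _ := e4
        _ ≤ _ := e5
    have hb3 : (1/(m k : ℝ)) ≤ (1/2:ℝ)^k := by
      have : (1/2:ℝ)^k = 1/(2:ℝ)^k := by rw [one_div, one_div, inv_pow]
      rw [this]
      exact div_le_div_of_nonneg_left zero_le_one (by positivity) (hm2 k)
    have hb4 : (1/(m k : ℝ)) * ∑ i ∈ Finset.range K, h i ≤ (1/2:ℝ)^k * M :=
      mul_le_mul hb3 hb1 hb1' (by positivity)
    have hb5 := (hb2.trans_lt (htail k)).le
    calc ∑ i ∈ Finset.range K, (i:ℝ) * f n k i * c0 i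
        ≤ _ := step1
      _ = _ := step2
      _ ≤ (1/2:ℝ)^k * M + (1/2:ℝ)^k := add_le_add hb4 hb5
      _ = (M+1) * (1/2:ℝ)^k := by ring
  -- conclude summability
  have geo : Summable (fun k : ℕ => (M+1) * (1/2:ℝ)^k) :=
    (summable_geometric_of_lt_one (by norm_num) (by norm_num)).mul_left _
  have hpart : ∀ K : ℕ, ∑ i ∈ Finset.range K, gam n i * c0 i
      ≤ ∑' k : ℕ, (M+1) * (1/2:ℝ)^k := by
    intro K
    have s2 : ∑ i ∈ Finset.range K, gam n i * c0 i
        ≤ ∑ i ∈ Finset.range K, (i:ℝ) * g n i * c0 i :=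
      Finset.sum_le_sum (fun i _ =>
        mul_le_mul_of_nonneg_right (gam_le hn4 (Nat.cast_nonneg i)) (hc0 i))
    have s3 : ∑ i ∈ Finset.range K, (i:ℝ) * g n i * c0 i
        = ∑' k, ∑ i ∈ Finset.range K, (i:ℝ) * f n k i * c0 i := by
      rw [Summable.tsum_finsetSum (fun i _ => hsumk i)]
      exact Finset.sum_congr rfl (fun i _ => (hig i).symm)
    have s4 : Summable (fun k => ∑ i ∈ Finset.range K, (i:ℝ) * f n k i * c0 i) :=
      Summable.of_nonneg_of_le (fun k => Finset.sum_nonneg (fun i _ => hfnn k i))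
        (fun k => hA k K) geo
    have s5 : ∑' k, ∑ i ∈ Finset.range K, (i:ℝ) * f n k i * c0 i
        ≤ ∑' k : ℕ, (M+1) * (1/2:ℝ)^k :=
      Summable.tsum_le_tsum (fun k => hA k K) s4 geo
    calc ∑ i ∈ Finset.range K, gam n i * c0 i ≤ _ := s2
      _ = _ := s3
      _ ≤ _ := s5
  exact summable_of_sum_range_le
    (fun i => mul_nonneg (gam_nonneg hn4 (Nat.cast_nonneg i)) (hc0 i)) hpart
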